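/- Fix j ∈ {1,…,p} and γ ∈ Θ = [0,∞)^p, and set C_j := σ²·Iₙ + Σ_{k≠j} γ_k x_k x_kᵀ (positive definite). Then ℓ(γ) = −½ log det(C_j + γ_j x_j x_jᵀ) + ½ · γ_j (x_jᵀ C_j⁻¹ y)² / (1 + γ_j x_jᵀ C_j⁻¹ x_j) − ½ yᵀ C_j⁻¹ y. -/

import Mathlib

open Matrix

private lemma mul_vecMulVec' {n : ℕ} (M : Matrix (Fin n) (Fin n) ℝ) (u v : Fin n → ℝ) :
    M * vecMulVec u v = vecMulVec (M *ᵥ u) v := by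
  ext i k
  simp [mul_apply, vecMulVec_apply, mulVec, dotProduct, Finset.sum_mul, mul_assoc]

private lemma vecMulVec_mul' {n : ℕ} (M : Matrix (Fin n) (Fin n) ℝ) (u v : Fin n → ℝ) :
    vecMulVec u v * M = vecMulVec u (v ᵥ* M) := by
  ext i k
  simp [mul_apply, vecMulVec_apply, vecMul, dotProduct, Finset.mul_sum, mul_assoc]

private lemma vecMulVec_mul_vecMulVec' {n : ℕ} (u v w z : Fin n → ℝ) :
    vecMulVec u v * vecMulVec w z = (v ⬝ᵥ w) • vecMulVec u z := by
  ext i k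
  simp only [mul_apply, vecMulVec_apply, Matrix.smul_apply, dotProduct, Finset.sum_mul, smul_eq_mul]
  exact Finset.sum_congr rfl fun m _ => by ring

private lemma vecMulVec_mulVec' {n : ℕ} (u v yv : Fin n → ℝ) :
    vecMulVec u v *ᵥ yv = (v ⬝ᵥ yv) • u := by
  ext i
  simp only [mulVec, vecMulVec_apply, dotProduct, Pi.smul_apply, smul_eq_mul, Finset.sum_mul]
  exact Finset.sum_congr rfl fun m _ => by ring

/-- Decomposition of the sparse Bayesian learning marginal log-likelihood in its `j`-th
coordinate: with `C_j = σ² Iₙ + Σ_{k≠j} γ_k x_k x_kᵀ`,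
`ℓ(γ) = -½ log det(C_j + γ_j x_j x_jᵀ) + ½ γ_j (x_jᵀC_j⁻¹y)²/(1 + γ_j x_jᵀC_j⁻¹x_j)
  - ½ yᵀC_j⁻¹y`. -/
theorem sbl_loglik_coordinate_decomposition (n p : ℕ) (y : Fin n → ℝ)
    (x : Fin p → Fin n → ℝ)
    (σ2 : ℝ) (hσ : 0 < σ2)
    (C : (Fin p → ℝ) → Matrix (Fin n) (Fin n) ℝ)
    (hC : ∀ γ, C γ = σ2 • (1 : Matrix (Fin n) (Fin n) ℝ) +
      ∑ j : Fin p, γ j • vecMulVec (x j) (x j))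
    (L : (Fin p → ℝ) → ℝ)
    (hL : ∀ γ, L γ = -(1/2) * Real.log (C γ).det - (1/2) * (y ⬝ᵥ (C γ)⁻¹.mulVec y))
    (j : Fin p) (γ : Fin p → ℝ) (hγ : ∀ k, 0 ≤ γ k)
    (Cj : Matrix (Fin n) (Fin n) ℝ)
    (hCj : Cj = σ2 • (1 : Matrix (Fin n) (Fin n) ℝ) +
      ∑ k ∈ Finset.univ.erase j, γ k • vecMulVec (x k) (x k)) :
    L γ = -(1/2) * Real.log (Cj + γ j • vecMulVec (x j) (x j)).det
      + (1/2) * (γ j * (x j ⬝ᵥ Cj⁻¹.mulVec y)^2 / (1 + γ j * (x j ⬝ᵥ Cj⁻¹.mulVec (x j))))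
      - (1/2) * (y ⬝ᵥ Cj⁻¹.mulVec y) := by
  -- split C γ
  have hsplit : C γ = Cj + γ j • vecMulVec (x j) (x j) := by
    rw [hC, hCj, ← Finset.sum_erase_add _ _ (Finset.mem_univ j), add_assoc]
  -- Cj is positive definite
  have hpd : Cj.PosDef := by
    rw [posDef_iff_dotProduct_mulVec]
    constructor
    · ext i k
      simp only [hCj, conjTranspose_apply, Matrix.add_apply, Matrix.smul_apply, one_apply, Matrix.sum_apply,
        vecMulVec_apply, smul_eq_mul, star_trivial]
      congr 1
      · simp [eq_comm]
      · exact Finset.sum_congr rfl fun m _ => by ring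
    · intro z hz
      have h1 : (0:ℝ) < z ⬝ᵥ z := by
        simpa using dotProduct_self_star_pos_iff.mpr hz
      simp only [star_trivial, hCj, add_mulVec, dotProduct_add, smul_mulVec,
        dotProduct_smul, one_mulVec, smul_eq_mul]
      have h2 : ∀ k ∈ Finset.univ.erase j,
          (0:ℝ) ≤ z ⬝ᵥ (γ k • vecMulVec (x k) (x k)) *ᵥ z := by
        intro k _
        rw [smul_mulVec, vecMulVec_mulVec', dotProduct_smul, dotProduct_smul,
          smul_eq_mul, smul_eq_mul, dotProduct_comm z (x k)]
        exact mul_nonneg (hγ k) (mul_self_nonneg _)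
      have h3 : (0:ℝ) ≤ z ⬝ᵥ (∑ k ∈ Finset.univ.erase j,
          γ k • vecMulVec (x k) (x k)) *ᵥ z := by
        have hsum : (∑ k ∈ Finset.univ.erase j, γ k • vecMulVec (x k) (x k)) *ᵥ z
            = ∑ k ∈ Finset.univ.erase j, (γ k • vecMulVec (x k) (x k)) *ᵥ z :=
          map_sum (Matrix.mulVec.addMonoidHomLeft z) _ _
        have hdsum : z ⬝ᵥ (∑ k ∈ Finset.univ.erase j, (γ k • vecMulVec (x k) (x k)) *ᵥ z)
            = ∑ k ∈ Finset.univ.erase j, z ⬝ᵥ (γ k • vecMulVec (x k) (x k)) *ᵥ z := by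
          simp only [dotProduct, Finset.sum_apply, Finset.mul_sum]
          rw [Finset.sum_comm]
        rw [hsum, hdsum]
        exact Finset.sum_nonneg h2
      exact add_pos_of_pos_of_nonneg (mul_pos hσ h1) h3
  have hdet : IsUnit Cj.det := hpd.det_pos.ne'.isUnit
  set M : Matrix (Fin n) (Fin n) ℝ := Cj⁻¹ with hM
  have hsym : Mᵀ = M := by
    have := hpd.inv.isHermitian
    rw [Matrix.IsHermitian, conjTranspose_eq_transpose_of_trivial] at this
    exact this
  have hCjM : Cj * M = 1 := Matrix.mul_nonsing_inv Cj hdet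
  set u : Fin n → ℝ := M *ᵥ x j with hu
  set s : ℝ := x j ⬝ᵥ M *ᵥ x j with hs
  have hvecMul : x j ᵥ* M = u := by rw [← hsym, vecMul_transpose]
  have hCju : Cj *ᵥ u = x j := by
    rw [hu, mulVec_mulVec, hCjM, one_mulVec]
  have hsnn : 0 ≤ s := by
    have := hpd.inv.posSemidef.dotProduct_mulVec_nonneg (x j)
    simpa [hs] using this
  have hd : (0:ℝ) < 1 + γ j * s :=
    add_pos_of_pos_of_nonneg one_pos (mul_nonneg (hγ j) hsnn)
  have hd0 : (1 + γ j * s) ≠ 0 := hd.ne'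
  set B : Matrix (Fin n) (Fin n) ℝ :=
    M - (γ j / (1 + γ j * s)) • vecMulVec u u with hB
  have hxu : x j ⬝ᵥ u = s := by rw [hs, hu]
  -- Sherman–Morrison: B is a right inverse
  have hmul : (Cj + γ j • vecMulVec (x j) (x j)) * B = 1 := by
    rw [hB, mul_sub, add_mul, add_mul, Matrix.mul_smul, Matrix.mul_smul, Matrix.smul_mul,
      Matrix.smul_mul, hCjM, mul_vecMulVec', hCju, vecMulVec_mul', hvecMul,
      vecMulVec_mul_vecMulVec', hxu]
    match_scalars
    · ring
    · field_simp
      ring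
  have hinv : (Cj + γ j • vecMulVec (x j) (x j))⁻¹ = B :=
    Matrix.inv_eq_right_inv hmul
  have huy : u ⬝ᵥ y = x j ⬝ᵥ M *ᵥ y := by
    rw [dotProduct_mulVec, hvecMul]
  have hyBy : y ⬝ᵥ B *ᵥ y =
      y ⬝ᵥ M *ᵥ y - γ j * (x j ⬝ᵥ M *ᵥ y)^2 / (1 + γ j * s) := by
    rw [hB, sub_mulVec, smul_mulVec, vecMulVec_mulVec', dotProduct_sub,
      dotProduct_smul, dotProduct_smul, smul_eq_mul, smul_eq_mul,
      dotProduct_comm y u, huy]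
    ring
  rw [hL, hsplit, hinv, hyBy]
  ring
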